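/- Let W be a finite-dimensional real inner product space, F : W → W Lipschitz continuous and differentiable at a point x with ‖F(x)‖ ≠ 0, and let η < 1 and d ∈ W satisfy ‖F′(x) d + F(x)‖ ≤ η ‖F(x)‖. Then d is a descent direction for the function x ↦ ‖F(x)‖ at x: there exists t̄ > 0 such that ‖F(x + t d)‖ < ‖F(x)‖ for all t ∈ (0, t̄). -/

import Mathlib

open scoped RealInnerProductSpace

/-- An inexact Newton direction with residual factor `η < 1` is a descent
direction of `x ↦ ‖F(x)‖`. -/
theorem inexact_newton_descent_direction
    {W : Type*} [NormedAddCommGroup W] [InnerProductSpace ℝ W] [FiniteDimensional ℝ W]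
    (F : W → W) (c : NNReal) (hFlip : LipschitzWith c F)
    (x : W) (F' : W →L[ℝ] W) (hF' : HasFDerivAt F F' x)
    (hFx : F x ≠ 0)
    (η : ℝ) (hη : η < 1) (d : W) (hd : ‖F' d + F x‖ ≤ η * ‖F x‖) :
    ∃ tbar > (0 : ℝ), ∀ t ∈ Set.Ioo (0 : ℝ) tbar, ‖F (x + t • d)‖ < ‖F x‖ := by
  set G : ℝ → W := fun t => F (x + t • d) with hG
  have hGd : HasDerivAt G (F' d) 0 := by
    have hline : HasDerivAt (fun t : ℝ => x + t • d) d 0 := by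
      simpa using ((hasDerivAt_id (0:ℝ)).smul_const d).const_add x
    have hF2 : HasFDerivAt F F' (x + (0:ℝ) • d) := by simpa using hF'
    have := hF2.comp_hasDerivAt 0 hline
    exact this
  -- derivative of φ t = ⟪G t, G t⟫ at 0
  set φ : ℝ → ℝ := fun t => ⟪G t, G t⟫ with hφdef
  have hG0 : G 0 = F x := by simp [hG]
  have hφ : HasDerivAt φ (⟪F x, F' d⟫ + ⟪F' d, F x⟫) 0 := by
    have := hGd.inner ℝ hGd
    simpa [hG0, hφdef] using this
  have key : ⟪F x, F' d⟫ + ⟪F' d, F x⟫ < 0 := by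
    have h1 : ⟪F x, F' d⟫ = ⟪F x, F' d + F x⟫ - ‖F x‖^2 := by
      rw [inner_add_right, real_inner_self_eq_norm_sq]; ring
    have h2 : ⟪F x, F' d + F x⟫ ≤ ‖F x‖ * ‖F' d + F x‖ := real_inner_le_norm _ _
    have h3 : ‖F x‖ * ‖F' d + F x‖ ≤ ‖F x‖ * (η * ‖F x‖) :=
      mul_le_mul_of_nonneg_left hd (norm_nonneg _)
    have hnz : ‖F x‖ ≠ 0 := norm_ne_zero_iff.2 hFx
    have hpos : (0:ℝ) < ‖F x‖^2 := by positivity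
    have : ⟪F x, F' d⟫ ≤ (η - 1) * ‖F x‖^2 := by
      rw [h1]; nlinarith
    have hcomm : ⟪F' d, F x⟫ = ⟪F x, F' d⟫ := real_inner_comm _ _
    nlinarith
  -- slope of φ tends to a negative number
  have hslope := hasDerivAt_iff_tendsto_slope.1 hφ
  have hneg : ∀ᶠ t in nhdsWithin (0:ℝ) {(0:ℝ)}ᶜ, slope φ 0 t < 0 :=
    hslope.eventually (Iio_mem_nhds key)
  rw [Filter.Eventually, Metric.mem_nhdsWithin_iff] at hneg
  obtain ⟨ε, hε, hball⟩ := hneg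
  refine ⟨ε, hε, fun t ht => ?_⟩
  have ht0 : t ≠ 0 := ne_of_gt ht.1
  have hmem : t ∈ Metric.ball (0:ℝ) ε := by
    rw [Metric.mem_ball, Real.dist_eq, sub_zero, abs_of_pos ht.1]; exact ht.2
  have hs : slope φ 0 t < 0 := hball ⟨hmem, ht0⟩
  rw [slope_def_field] at hs
  have hφt : φ t < φ 0 := by
    have : (φ t - φ 0) / (t - 0) < 0 := hs
    rw [sub_zero] at this
    rcases div_neg_iff.1 this with h | h
    · linarith [ht.1, h.2]
    · linarith [h.1]
  have hφeq : ∀ s, φ s = ‖G s‖^2 := fun s => real_inner_self_eq_norm_sq _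
  rw [hφeq, hφeq, hG0] at hφt
  nlinarith [norm_nonneg (G t), norm_nonneg (F x)]
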